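/- arXiv:0801.4079 — 3 statements merged into one kernel-verified Lean document; each statement's English description precedes it below -/
import Mathlib

section
/- Let N be a uniform n-bit NLFSR with singular feedback functions f_i = x_{(i+1) mod n} ⊕ g_i and terminal bit τ, let a, b ∈ {0,…,n−1} with b < a, and let p_S be a monomial of the ANF of g_a with b ≥ a − min(S). If b < τ and, for every i ∈ {b, b+1, …, n−1}, every index in dep(g_i) is at most b, then the NLFSR N′ obtained from N by shifting p_S from g_a to g_b is equivalent to N. -/
/-- The state-update map of an NLFSR given by feedback functions `F`. -/
def nlfsrStep (n : ℕ) (F : Fin n → (Fin n → Bool) → Bool) (s : Fin n → Bool) : Fin n → Bool :=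
  fun i => F i s

/-- The state of the NLFSR at time `t`, starting from initial state `s0`. -/
def stateAt (n : ℕ) (F : Fin n → (Fin n → Bool) → Bool) (s0 : Fin n → Bool) (t : ℕ) :
    Fin n → Bool :=
  (nlfsrStep n F)^[t] s0

/-- The index `(i+1) mod n`. -/
def succIdx {n : ℕ} (i : Fin n) : Fin n :=
  ⟨((i : ℕ) + 1) % n, Nat.mod_lt _ i.pos⟩

/-- Two NLFSRs are equivalent if there are initial states (possibly different for each)
from which they generate the same output sequences (the output is bit 0). -/
def EquivalentN (n : ℕ) (F F' : Fin n → (Fin n → Bool) → Bool) : Prop :=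
  ∃ s0 s0' : Fin n → Bool, ∀ (t : ℕ) (z : Fin n), (z : ℕ) = 0 →
    stateAt n F s0 t z = stateAt n F' s0' t z

/-- The dependence set of a Boolean function of `n` variables. -/
def depF (n : ℕ) (f : (Fin n → Bool) → Bool) : Finset (Fin n) :=
  Finset.univ.filter
    (fun i => ∃ s : Fin n → Bool, f (Function.update s i false) ≠ f (Function.update s i true))

/-- The (unique) function `g_i` with `f_i = x_{i+1} ⊕ g_i`. -/
def gfun (n : ℕ) (F : Fin n → (Fin n → Bool) → Bool) (i : Fin n) : (Fin n → Bool) → Bool :=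
  fun s => xor (F i s) (s (succIdx i))

/-- All feedback functions are singular: `f_i = x_{(i+1) mod n} ⊕ g_i` with
`(i+1) mod n ∉ dep(g_i)`. -/
def SingularAll (n : ℕ) (F : Fin n → (Fin n → Bool) → Bool) : Prop :=
  ∀ i : Fin n, succIdx i ∉ depF n (gfun n F i)

/-- The terminal bit: the largest index `i ∈ {0,…,n−1}` such that `f_j = x_{j+1}`
for all `j < i`. -/
noncomputable def terminalBit (n : ℕ) (F : Fin n → (Fin n → Bool) → Bool) : ℕ :=
  sSup {i : ℕ | i < n ∧ ∀ j : Fin n, (j : ℕ) < i → ∀ s, F j s = s (succIdx j)}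

/-- A uniform NLFSR: all feedback functions are singular and, for every bit `i`
above the terminal bit `τ`, every index in `dep(g_i)` is at most `τ`. -/
def UniformN (n : ℕ) (F : Fin n → (Fin n → Bool) → Bool) : Prop :=
  SingularAll n F ∧
    ∀ i : Fin n, terminalBit n F < (i : ℕ) →
      ∀ k ∈ depF n (gfun n F i), (k : ℕ) ≤ terminalBit n F

/-- The monomial `p_S(x) = ∧_{i ∈ S} x_i`. -/
def monomial (n : ℕ) (S : Finset (Fin n)) : (Fin n → Bool) → Bool :=
  fun s => decide (∀ i ∈ S, s i = true)

/-- The ANF coefficient of `f` at the monomial with support `S`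
(Möbius inversion over `GF(2)`). -/
def anfCoeff (n : ℕ) (f : (Fin n → Bool) → Bool) (S : Finset (Fin n)) : Bool :=
  decide (Odd (S.powerset.filter (fun T => f (fun i => decide (i ∈ T)) = true)).card)

/-- `S − k = {(i − k) mod n : i ∈ S}`. -/
def shiftSet {n : ℕ} (S : Finset (Fin n)) (k : ℕ) : Finset (Fin n) :=
  S.image (fun i : Fin n => (⟨((i : ℕ) + (n - k % n)) % n, Nat.mod_lt _ i.pos⟩ : Fin n))

/-- The smallest index of a variable in `S`. -/
noncomputable def minIdx {n : ℕ} (S : Finset (Fin n)) : ℕ :=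
  sInf {m : ℕ | ∃ i ∈ S, (i : ℕ) = m}

/-- The largest index of a variable in `S`. -/
noncomputable def maxIdx {n : ℕ} (S : Finset (Fin n)) : ℕ :=
  sSup {m : ℕ | ∃ i ∈ S, (i : ℕ) = m}

/-- Shifting the monomial `p_S` from `g_a` to `g_b`: it replaces `g_a` by `g_a ⊕ p_S`
and `g_b` by `g_b ⊕ p_{S−(a−b)}`, leaving all other feedback functions unchanged. -/
def shiftNLFSR {n : ℕ} (F : Fin n → (Fin n → Bool) → Bool) (a b : Fin n)
    (S : Finset (Fin n)) : Fin n → (Fin n → Bool) → Bool :=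
  fun i s =>
    if i = a then xor (F i s) (monomial n S s)
    else if i = b then xor (F i s) (monomial n (shiftSet S ((a : ℕ) - (b : ℕ))) s)
    else F i s

/-- A Fibonacci NLFSR: `f_i = x_{i+1}` for `0 ≤ i < n−1`, and `f_{n−1} = x_0 ⊕ g_{n−1}`
is singular with `0 ∉ dep(g_{n−1})`. -/
def FibonacciP (n : ℕ) (F : Fin n → (Fin n → Bool) → Bool) : Prop :=
  (∀ i : Fin n, (i : ℕ) < n - 1 → ∀ s, F i s = s (succIdx i)) ∧
  (∀ i : Fin n, (i : ℕ) = n - 1 → succIdx i ∉ depF n (gfun n F i))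

/-- A finite directed graph: a finite vertex set together with a finite edge set. -/
structure DiGraph (V : Type) [DecidableEq V] where
  verts : Finset V
  edges : Finset (V × V)

/-- One substitution step `sub(v_i, v_j)`: if `v_i` has exactly one incoming edge,
coming from `v_j ≠ v_i`, remove `v_i` and, for each outgoing edge `(v_i, v_k)`,
add the edge `(v_j, v_k)`. -/
def SubStep {V : Type} [DecidableEq V] (G G' : DiGraph V) : Prop :=
  ∃ i j : V, i ∈ G.verts ∧ j ∈ G.verts ∧ i ≠ j ∧
    G.edges.filter (fun e => e.2 = i) = {(j, i)} ∧
    G' = ⟨G.verts.erase i,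
      (G.edges.filter (fun e => e.1 ≠ i ∧ e.2 ≠ i)) ∪
        ((G.edges.filter (fun e => e.1 = i)).image (fun e => (j, e.2)))⟩

/-- A graph is reducible to the single vertex `v` if some finite sequence of
substitutions transforms it into a one-vertex graph on `v`. -/
def ReducibleTo {V : Type} [DecidableEq V] (G : DiGraph V) (v : V) : Prop :=
  ∃ G' : DiGraph V, Relation.ReflTransGen SubStep G G' ∧ G'.verts = {v}

/-- The feedback graph of an NLFSR: there is an edge from `v_i` to `v_j`
iff `i ∈ dep(f_j)`. -/
def feedbackGraph (n : ℕ) (F : Fin n → (Fin n → Bool) → Bool) : DiGraph (Fin n) :=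
  ⟨Finset.univ, Finset.univ.filter (fun e : Fin n × Fin n => e.1 ∈ depF n (F e.2))⟩

/-- XOR of the Booleans `f x` over `x ∈ A`. -/
def xorSum {α : Type*} (A : Finset α) (f : α → Bool) : Bool :=
  decide (Odd (A.filter (fun x => f x = true)).card)

/-- The feedback functions `g̃_i` of the fully shifted Galois NLFSR obtained from a
Fibonacci NLFSR whose feedback monomial supports are `P`, with terminal bit `τ`. -/
noncomputable def galoisG (n : ℕ) (P : Finset (Finset (Fin n))) (τ : ℕ) :
    Fin n → (Fin n → Bool) → Bool :=
  fun i s =>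
    xor
      (xorSum (P.filter (fun S => minIdx S ≤ n - 1 - τ ∧ n - 1 - minIdx S = (i : ℕ)))
        (fun S => monomial n (shiftSet S (minIdx S)) s))
      (if (i : ℕ) = τ then
        xorSum (P.filter (fun S => n - 1 - τ < minIdx S))
          (fun S => monomial n (shiftSet S (n - 1 - τ)) s)
      else false)
lemma not_dep_eval_update (n : ℕ) (f : (Fin n → Bool) → Bool) (i : Fin n)
    (hi : i ∉ depF n f) (s : Fin n → Bool) (c : Bool) :
    f (Function.update s i c) = f s := by
  simp only [depF, Finset.mem_filter, Finset.mem_univ, true_and, not_exists, ne_eq,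
    not_not] at hi
  have h1 := hi s
  have h2 : f (Function.update s i c) = f (Function.update s i (s i)) := by
    cases c <;> cases hsi : s i <;> simp_all
  rw [h2, Function.update_eq_self]

lemma eval_congr_aux (n : ℕ) (f : (Fin n → Bool) → Bool) (D : Finset (Fin n)) :
    ∀ s s' : Fin n → Bool, (∀ i, i ∉ D → s i = s' i) →
      (∀ i ∈ depF n f, s i = s' i) → f s = f s' := by
  induction D using Finset.induction_on with
  | empty =>
    intro s s' h _
    exact congrArg f (funext fun i => h i (Finset.notMem_empty i))
  | @insert i D hiD ih =>
    intro s s' hD hdep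
    have h1 : f s = f (Function.update s' i (s i)) := by
      apply ih
      · intro j hj
        by_cases hji : j = i
        · subst hji; simp
        · rw [Function.update_of_ne hji]
          exact hD j (by simp [Finset.mem_insert, hji, hj])
      · intro j hj
        by_cases hji : j = i
        · subst hji; simp
        · rw [Function.update_of_ne hji]; exact hdep j hj
    rw [h1]
    by_cases hi : i ∈ depF n f
    · rw [hdep i hi, Function.update_eq_self]
    · exact not_dep_eval_update n f i hi s' (s i)

lemma eval_congr_dep (n : ℕ) (f : (Fin n → Bool) → Bool) (s s' : Fin n → Bool)
    (h : ∀ i ∈ depF n f, s i = s' i) : f s = f s' :=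
  eval_congr_aux n f Finset.univ s s' (fun i hi => absurd (Finset.mem_univ i) hi) h

lemma anf_subset_dep (n : ℕ) (f : (Fin n → Bool) → Bool) (S : Finset (Fin n))
    (h : anfCoeff n f S = true) : ∀ i ∈ S, i ∈ depF n f := by
  intro i hiS
  by_contra hdep
  have hOdd : Odd (S.powerset.filter (fun T => f (fun j => decide (j ∈ T)) = true)).card :=
    of_decide_eq_true h
  set A := S.powerset.filter (fun T => f (fun j => decide (j ∈ T)) = true) with hA
  have hval : ∀ T : Finset (Fin n), i ∉ T →
      f (fun j => decide (j ∈ insert i T)) = f (fun j => decide (j ∈ T)) := by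
    intro T hiT
    have hchi : (fun j => decide (j ∈ insert i T)) =
        Function.update (fun j => decide (j ∈ T)) i true := by
      funext j
      by_cases hji : j = i
      · subst hji; simp
      · simp [Function.update_of_ne hji, Finset.mem_insert, hji]
    rw [hchi]
    exact not_dep_eval_update n f i hdep _ true
  have hcard : (A.filter (fun T => i ∈ T)).card = (A.filter (fun T => i ∉ T)).card := by
    refine Finset.card_bij' (fun T _ => T.erase i) (fun T _ => insert i T) ?hi ?hj ?li ?ri
    case hi =>
      intro T hT
      simp only [hA, Finset.mem_filter, Finset.mem_powerset] at hT ⊢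
      obtain ⟨⟨hsub, hf⟩, hiT⟩ := hT
      refine ⟨⟨(Finset.erase_subset _ _).trans hsub, ?_⟩, Finset.notMem_erase _ _⟩
      have hv := hval (T.erase i) (Finset.notMem_erase _ _)
      rw [Finset.insert_erase hiT] at hv
      rw [← hv]; exact hf
    case hj =>
      intro T hT
      simp only [hA, Finset.mem_filter, Finset.mem_powerset] at hT ⊢
      obtain ⟨⟨hsub, hf⟩, hiT⟩ := hT
      refine ⟨⟨Finset.insert_subset hiS hsub, ?_⟩, Finset.mem_insert_self _ _⟩
      rw [hval T hiT]; exact hf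
    case li =>
      intro T hT
      simp only [hA, Finset.mem_filter] at hT
      exact Finset.insert_erase hT.2
    case ri =>
      intro T hT
      simp only [hA, Finset.mem_filter] at hT
      exact Finset.erase_insert hT.2
  have hsplit := Finset.card_filter_add_card_filter_not
    (s := A) (p := fun T => i ∈ T)
  have heven : Even A.card := by
    rw [← hsplit, hcard]
    exact ⟨_, rfl⟩
  exact (Nat.not_odd_iff_even.mpr heven) hOdd

lemma monomial_congr {n : ℕ} (S : Finset (Fin n)) {s s' : Fin n → Bool}
    (h : ∀ i ∈ S, s i = s' i) : monomial n S s = monomial n S s' := by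
  unfold monomial
  apply decide_eq_decide.mpr
  constructor <;> intro hh i hi
  · rw [← h i hi]; exact hh i hi
  · rw [h i hi]; exact hh i hi


set_option maxHeartbeats 2000000 in
/-- Lemma 3(b): if `b ≥ a − min(S)`, `b < τ` and `dep(g_i) ⊆ {0,…,b}`
for every `i ∈ {b,…,n−1}`, then shifting the monomial `p_S` from `g_a` to `g_b`
preserves equivalence. -/
theorem shifting_below_terminal_equivalent (n : ℕ) (F : Fin n → (Fin n → Bool) → Bool)
    (hU : UniformN n F)
    (a b : Fin n) (hba : b < a)
    (S : Finset (Fin n)) (hS : S.Nonempty)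
    (hmem : anfCoeff n (gfun n F a) S = true)
    (hmin : (a : ℕ) - minIdx S ≤ (b : ℕ))
    (hterm : (b : ℕ) < terminalBit n F)
    (hdep : ∀ i : Fin n, (b : ℕ) ≤ (i : ℕ) →
      ∀ k ∈ depF n (gfun n F i), (k : ℕ) ≤ (b : ℕ)) :
    EquivalentN n (shiftNLFSR F a b S) F := by
  classical
  have hn : 0 < n := a.pos
  -- terminal bit facts
  have hτmem : terminalBit n F < n ∧
      ∀ j : Fin n, (j : ℕ) < terminalBit n F → ∀ s, F j s = s (succIdx j) := by
    have h0 : (0:ℕ) ∈ {i : ℕ | i < n ∧ ∀ j : Fin n, (j : ℕ) < i → ∀ s, F j s = s (succIdx j)} :=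
      ⟨hn, fun j hj => absurd hj (Nat.not_lt_zero _)⟩
    have hbdd : BddAbove {i : ℕ | i < n ∧ ∀ j : Fin n, (j : ℕ) < i → ∀ s, F j s = s (succIdx j)} :=
      ⟨n, fun x hx => le_of_lt hx.1⟩
    exact Nat.sSup_mem ⟨0, h0⟩ hbdd
  obtain ⟨hτn, hτpure⟩ := hτmem
  have hba' : (b:ℕ) < (a:ℕ) := hba
  have han : (a:ℕ) < n := a.isLt
  set d := (a:ℕ) - (b:ℕ) with hddef
  have hd0 : 0 < d := by omega
  have hdn : d < n := by omega
  have hSdep : ∀ j ∈ S, (j:ℕ) ≤ (b:ℕ) := fun j hj =>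
    hdep a (le_of_lt hba') j (anf_subset_dep n _ S hmem j hj)
  have hSge : ∀ j ∈ S, d ≤ (j:ℕ) := by
    intro j hj
    have h1 : minIdx S ≤ (j:ℕ) := Nat.sInf_le ⟨j, hj, rfl⟩
    omega
  -- the reference trajectory
  set x : ℕ → Fin n → Bool := fun t => stateAt n F (fun _ => false) t with hx
  have hx1 : ∀ (t : ℕ) (i : Fin n), x (t+1) i = F i (x t) := by
    intro t i
    show (nlfsrStep n F)^[t+1] _ i = _
    rw [Function.iterate_succ_apply']
    rfl
  -- shifted clock identity for bits below the terminal bit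
  have hshiftx : ∀ (c t j : ℕ) (hjc : j + c ≤ terminalBit n F),
      x (t + c) ⟨j, by omega⟩ = x t ⟨j + c, by omega⟩ := by
    intro c
    induction c with
    | zero => intro t j h; rfl
    | succ c ih =>
      intro t j h
      have hjτ : (j:ℕ) < terminalBit n F := by omega
      have hstep : x (t + (c+1)) ⟨j, by omega⟩ = x (t+c) (succIdx ⟨j, by omega⟩) := by
        have := hx1 (t+c) ⟨j, by omega⟩
        rw [show t + (c+1) = (t+c)+1 by omega, this]
        exact hτpure ⟨j, by omega⟩ hjτ _
      rw [hstep]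
      have hsv : succIdx (⟨j, by omega⟩ : Fin n) = ⟨j+1, by omega⟩ := by
        apply Fin.ext
        show (j + 1) % n = j + 1
        exact Nat.mod_eq_of_lt (by omega)
      rw [hsv, ih t (j+1) (by omega)]
      congr 1
      exact Fin.ext (by show j + 1 + c = j + (c+1); omega)
  have hval : ∀ (t : ℕ) (j : Fin n) (hj : j ∈ S),
      x (t+d) ⟨(j:ℕ) - d, lt_of_le_of_lt (Nat.sub_le _ _) j.isLt⟩ = x t j := by
    intro t j hj
    have h1 := hSge j hj
    have h2 := hSdep j hj
    rw [hshiftx d t ((j:ℕ) - d) (by omega)]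
    congr 1
    exact Fin.ext (by show (j:ℕ) - d + d = (j:ℕ); omega)
  -- the image function of shiftSet sends j ∈ S to ⟨j - d, _⟩
  have hφ : ∀ j : Fin n, j ∈ S →
      (⟨((j:ℕ) + (n - d % n)) % n, Nat.mod_lt _ j.pos⟩ : Fin n) =
        ⟨(j:ℕ) - d, lt_of_le_of_lt (Nat.sub_le _ _) j.isLt⟩ := by
    intro j hj
    have h1 := hSge j hj
    have h2 : (j:ℕ) < n := j.isLt
    apply Fin.ext
    show ((j:ℕ) + (n - d % n)) % n = (j:ℕ) - d
    rw [Nat.mod_eq_of_lt hdn]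
    rw [show (j:ℕ) + (n - d) = ((j:ℕ) - d) + n by omega, Nat.add_mod_right]
    exact Nat.mod_eq_of_lt (by omega)
  -- the compensation sequence
  set u : ℕ → Bool := fun t => monomial n S (x t) with hu
  have hmonshift : ∀ (t : ℕ) (s' : Fin n → Bool),
      (∀ k : Fin n, (k:ℕ) ≤ (b:ℕ) → s' k = x (t+d) k) →
      monomial n (shiftSet S d) s' = u t := by
    intro t s' hagree
    show decide _ = decide _
    apply decide_eq_decide.mpr
    unfold shiftSet
    rw [Finset.forall_mem_image]
    have hsval : ∀ j (hj : j ∈ S),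
        s' (⟨((j:ℕ) + (n - d % n)) % n, Nat.mod_lt _ j.pos⟩ : Fin n) = x t j := by
      intro j hj
      have hb' : ((j:ℕ) - d) ≤ (b:ℕ) := le_trans (Nat.sub_le _ _) (hSdep j hj)
      rw [hφ j hj, hagree _ hb', hval t j hj]
    constructor
    · intro hh j hj
      rw [← hsval j hj]
      exact hh hj
    · intro hh j hj
      show s' _ = true
      rw [hsval j hj]
      exact hh j hj
  -- the compensated state
  set E : ℕ → Fin n → Bool := fun t i =>
    if (b:ℕ) < (i:ℕ) ∧ (i:ℕ) ≤ (a:ℕ) then xor (x (t+d) i) (u (t + ((i:ℕ) - (b:ℕ) - 1)))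
    else x (t+d) i with hE
  have hEagree : ∀ (t : ℕ) (k : Fin n), ((k:ℕ) ≤ (b:ℕ) ∨ (a:ℕ) < (k:ℕ)) → E t k = x (t+d) k := by
    intro t k hk
    show (if _ then _ else _) = _
    rw [if_neg (by omega)]
  have hEin : ∀ (t : ℕ) (k : Fin n), (b:ℕ) < (k:ℕ) → (k:ℕ) ≤ (a:ℕ) →
      E t k = xor (x (t+d) k) (u (t + ((k:ℕ) - (b:ℕ) - 1))) := by
    intro t k h1 h2
    show (if _ then _ else _) = _
    rw [if_pos ⟨h1, h2⟩]
  have hgE : ∀ (i : Fin n), (b:ℕ) ≤ (i:ℕ) → ∀ t, gfun n F i (E t) = gfun n F i (x (t+d)) := by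
    intro i hi t
    apply eval_congr_dep
    intro k hk
    exact hEagree t k (Or.inl (hdep i hi k hk))
  have hFsplit : ∀ (i : Fin n) (s : Fin n → Bool), F i s = xor (gfun n F i s) (s (succIdx i)) := by
    intro i s
    unfold gfun
    cases h1 : F i s <;> cases h2 : s (succIdx i) <;> rfl
  have hsucc : ∀ (i : Fin n) (h : (i:ℕ) + 1 < n), succIdx i = ⟨(i:ℕ)+1, h⟩ := by
    intro i h
    apply Fin.ext
    show ((i:ℕ) + 1) % n = (i:ℕ) + 1
    exact Nat.mod_eq_of_lt h
  have hsuccout : ∀ (i : Fin n), (a:ℕ) ≤ (i:ℕ) → ∀ t, E t (succIdx i) = x (t+d) (succIdx i) := by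
    intro i hi t
    apply hEagree
    by_cases hh : (i:ℕ) + 1 < n
    · right
      rw [hsucc i hh]
      show (a:ℕ) < (i:ℕ) + 1
      omega
    · left
      have hiv : (i:ℕ) + 1 = n := by have := i.isLt; omega
      show ((i:ℕ) + 1) % n ≤ (b:ℕ)
      rw [hiv, Nat.mod_self]
      omega
  -- the main induction
  set F' := shiftNLFSR F a b S with hF'
  have hmain : ∀ t, stateAt n F' (E 0) t = E t := by
    intro t
    induction t with
    | zero => rfl
    | succ t ih =>
      have hstep' : ∀ i : Fin n, stateAt n F' (E 0) (t+1) i = F' i (E t) := by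
        intro i
        show (nlfsrStep n F')^[t+1] _ i = _
        rw [Function.iterate_succ_apply']
        show F' i ((nlfsrStep n F')^[t] (E 0)) = _
        rw [show (nlfsrStep n F')^[t] (E 0) = E t from ih]
      funext i
      rw [hstep' i]
      by_cases hia : i = a
      · -- case i = a
        subst hia
        have h1 : F' i (E t) = xor (F i (E t)) (monomial n S (E t)) := by
          show (if i = i then _ else _) = _
          rw [if_pos rfl]
        have h2 : monomial n S (E t) = u (t + d) :=
          monomial_congr S (fun k hk => hEagree t k (Or.inl (hSdep k hk)))
        have h3 : F i (E t) = x ((t+d)+1) i := by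
          rw [hFsplit i (E t), hgE i (le_of_lt hba') t, hsuccout i (le_refl _) t,
            ← hFsplit i (x (t+d)), hx1 (t+d) i]
        rw [h1, h2, h3]
        show _ = (if _ then _ else _)
        rw [if_pos ⟨hba', le_refl _⟩]
        congr 1
        · congr 1
          omega
        · congr 1
          omega
      · by_cases hib : i = b
        · -- case i = b
          have hib' : (i:ℕ) = (b:ℕ) := by rw [hib]
          have h1 : F' i (E t) = xor (F i (E t)) (monomial n (shiftSet S d) (E t)) := by
            show (if i = a then _ else if i = b then _ else _) = _
            rw [if_neg hia, if_pos hib]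
          have hsb : succIdx i = ⟨(i:ℕ)+1, by omega⟩ := hsucc i (by omega)
          have h2 : F i (E t) = xor (x (t+d) ⟨(i:ℕ)+1, by omega⟩) (u t) := by
            rw [hτpure i (by omega) (E t), hsb,
              hEin t ⟨(i:ℕ)+1, by omega⟩ (by show (b:ℕ) < (i:ℕ)+1; omega)
                (by show (i:ℕ)+1 ≤ (a:ℕ); omega)]
            congr 2
            show t + ((i:ℕ) + 1 - (b:ℕ) - 1) = t
            omega
          have h3 : monomial n (shiftSet S d) (E t) = u t :=
            hmonshift t (E t) (fun k hk => hEagree t k (Or.inl hk))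
          rw [h1, h2, h3]
          show _ = (if _ then _ else _)
          rw [if_neg (by omega)]
          have h4 : x ((t+1)+d) i = x (t+d) (succIdx i) := by
            rw [show (t+1)+d = (t+d)+1 by omega, hx1 (t+d) i, hτpure i (by omega)]
          rw [h4, hsb]
          cases x (t+d) ⟨(i:ℕ)+1, by omega⟩ <;> cases u t <;> rfl
        · -- i ≠ a, i ≠ b
          have hF'i : F' i (E t) = F i (E t) := by
            show (if i = a then _ else if i = b then _ else _) = _
            rw [if_neg hia, if_neg hib]
          rw [hF'i]
          rcases lt_trichotomy ((i:ℕ)) ((b:ℕ)) with h1 | h1 | h1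
          · -- i < b : pure shift below terminal bit
            have hsb : succIdx i = ⟨(i:ℕ)+1, by omega⟩ := hsucc i (by omega)
            have h2 : F i (E t) = x (t+d) ⟨(i:ℕ)+1, by omega⟩ := by
              rw [hτpure i (by omega) (E t), hsb]
              exact hEagree t _ (Or.inl (by show (i:ℕ)+1 ≤ (b:ℕ); omega))
            rw [h2]
            show _ = (if _ then _ else _)
            rw [if_neg (by omega)]
            rw [show (t+1)+d = (t+d)+1 by omega, hx1 (t+d) i, hτpure i (by omega), hsb]
          · exact absurd (Fin.ext h1) hib
          · rcases lt_or_ge ((i:ℕ)) ((a:ℕ)) with h2 | h2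
            · -- b < i < a
              have hsb : succIdx i = ⟨(i:ℕ)+1, by omega⟩ := hsucc i (by omega)
              have h3 : E t (succIdx i) =
                  xor (x (t+d) (succIdx i)) (u (t + ((i:ℕ) - (b:ℕ)))) := by
                rw [hsb,
                  hEin t ⟨(i:ℕ)+1, by omega⟩ (by show (b:ℕ) < (i:ℕ)+1; omega)
                    (by show (i:ℕ)+1 ≤ (a:ℕ); omega)]
                congr 2
                show t + ((i:ℕ) + 1 - (b:ℕ) - 1) = t + ((i:ℕ) - (b:ℕ))
                omega
              have h4 : F i (E t) = xor (x ((t+d)+1) i) (u (t + ((i:ℕ) - (b:ℕ)))) := by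
                rw [hFsplit i (E t), hgE i (by omega) t, h3, ← Bool.xor_assoc,
                  ← hFsplit i (x (t+d)), hx1 (t+d) i]
              rw [h4]
              show _ = (if _ then _ else _)
              rw [if_pos ⟨h1, by omega⟩]
              congr 1
              · congr 1
                omega
              · congr 1
                omega
            · -- i > a
              have h3 : F i (E t) = x ((t+d)+1) i := by
                rw [hFsplit i (E t), hgE i (by omega) t, hsuccout i h2 t,
                  ← hFsplit i (x (t+d)), hx1 (t+d) i]
              rw [h3]
              show _ = (if _ then _ else _)
              rw [if_neg (by omega)]
              congr 1
              omega
  -- conclude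
  refine ⟨E 0, x d, ?_⟩
  intro t z hz
  rw [hmain t]
  have hzb : E t z = x (t+d) z := hEagree t z (Or.inl (by omega))
  rw [hzb]
  show x (t+d) z = (nlfsrStep n F)^[t] ((nlfsrStep n F)^[d] (fun _ => false)) z
  rw [← Function.iterate_add_apply]
  rfl
end

section
/- Let N be an n-bit NLFSR all of whose feedback functions are singular, and suppose the feedback graph of N is reducible to the single vertex v_i for some i ∈ {0,…,n−1}. Then there exists a Boolean function h of n variables such that, for every initial state of N and every time t ≥ n, the value of bit i at time t equals h(s_i(t−n), s_i(t−n+1), …, s_i(t−1)), where s_i(u) denotes the value of bit i at time u. -/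
lemma depF_congr (n : ℕ) (f : (Fin n → Bool) → Bool) :
    ∀ (s s' : Fin n → Bool), (∀ l ∈ depF n f, s l = s' l) → f s = f s' := by
  suffices H : ∀ N (s s' : Fin n → Bool),
      (Finset.univ.filter (fun l => s l ≠ s' l)).card ≤ N →
      (∀ l ∈ depF n f, s l = s' l) → f s = f s' by
    exact fun s s' h => H _ s s' le_rfl h
  intro N
  induction N with
  | zero =>
    intro s s' hcard hdep
    have : ∀ l, s l = s' l := by
      intro l
      by_contra hl
      have : l ∈ Finset.univ.filter (fun l => s l ≠ s' l) := by simp [hl]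
      have := Finset.card_pos.mpr ⟨l, this⟩
      omega
    exact congrArg f (funext this)
  | succ N ih =>
    intro s s' hcard hdep
    by_cases hall : ∀ l, s l = s' l
    · exact congrArg f (funext hall)
    · push_neg at hall
      obtain ⟨l, hl⟩ := hall
      have hld : l ∉ depF n f := fun h => hl (hdep l h)
      have hconst : ∀ t : Fin n → Bool,
          f (Function.update t l false) = f (Function.update t l true) := by
        simp only [depF, Finset.mem_filter, Finset.mem_univ, true_and, not_exists,
          not_not] at hld
        exact hld
      have key : f s = f (Function.update s l (s' l)) := by
        have := hconst s
        rcases Bool.eq_false_or_eq_true (s l) with h1 | h1 <;>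
          rcases Bool.eq_false_or_eq_true (s' l) with h2 | h2 <;>
          first
            | (exfalso; rw [h1, h2] at hl; exact hl rfl)
            | (conv_lhs => rw [← Function.update_eq_self l s]
               rw [h1, h2]
               try rw [this]
               try rw [← this])
      rw [key]
      apply ih
      · have hsub : (Finset.univ.filter (fun m => Function.update s l (s' l) m ≠ s' m)) ⊆
            (Finset.univ.filter (fun m => s m ≠ s' m)).erase l := by
          intro m hm
          simp only [Finset.mem_filter, Finset.mem_univ, true_and] at hm
          by_cases hml : m = l
          · subst hml; simp at hm
          · rw [Finset.mem_erase]
            refine ⟨hml, ?_⟩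
            simp only [Finset.mem_filter, Finset.mem_univ, true_and]
            rwa [Function.update_of_ne hml] at hm
        have h1 := Finset.card_le_card hsub
        have hlmem : l ∈ Finset.univ.filter (fun m => s m ≠ s' m) := by simp [hl]
        have h2 := Finset.card_erase_of_mem hlmem
        omega
      · intro m hm
        by_cases hml : m = l
        · subst hml; simp
        · rw [Function.update_of_ne hml]; exact hdep m hm

lemma stateAt_succ (n : ℕ) (F : Fin n → (Fin n → Bool) → Bool) (s0 : Fin n → Bool) (t : ℕ)
    (k : Fin n) : stateAt n F s0 (t + 1) k = F k (stateAt n F s0 t) := by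
  simp [stateAt, Function.iterate_succ_apply', nlfsrStep]

lemma stateAt_pred (n : ℕ) (F : Fin n → (Fin n → Bool) → Bool) (s0 : Fin n → Bool) (t : ℕ)
    (ht : 1 ≤ t) (k : Fin n) : stateAt n F s0 t k = F k (stateAt n F s0 (t - 1)) := by
  obtain ⟨u, rfl⟩ : ∃ u, t = u + 1 := ⟨t - 1, by omega⟩
  simp [stateAt_succ]

def NInv (n : ℕ) (F : Fin n → (Fin n → Bool) → Bool) (G : DiGraph (Fin n)) : Prop :=
  ∃ (rep : Fin n → Fin n) (D : Fin n → ℕ) (H : Fin n → (ℕ → Bool) → Bool),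
    (∀ k, k ∉ G.verts → rep k ∈ G.verts) ∧
    (∀ k, k ∉ G.verts →
      D k ≤ (Finset.univ.filter (fun l => l ∉ G.verts ∧ rep l = rep k)).card) ∧
    (∀ k, k ∉ G.verts → 1 ≤ D k) ∧
    (∀ k, k ∉ G.verts → ∀ σ σ' : ℕ → Bool, (∀ m < D k, σ m = σ' m) → H k σ = H k σ') ∧
    (∀ k, k ∉ G.verts → ∀ s0 t, D k ≤ t →
      stateAt n F s0 t k = H k (fun m => stateAt n F s0 (t - 1 - m) (rep k))) ∧
    (∀ k ∈ G.verts, ∀ l ∈ depF n (F k),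
      ((if l ∈ G.verts then l else rep l), k) ∈ G.edges)

lemma inv_step (n : ℕ) (F : Fin n → (Fin n → Bool) → Bool) (G G' : DiGraph (Fin n))
    (hstep : SubStep G G') (hI : NInv n F G) : NInv n F G' := by
  classical
  obtain ⟨k, j, hk, hj, hkj, hfilt, hG'⟩ := hstep
  obtain ⟨rep, D, H, ha, hb, h1, hd, hc, he⟩ := hI
  subst hG'
  -- all dependencies of f_k have representative j
  have hdep_rep : ∀ l ∈ depF n (F k), (if l ∈ G.verts then l else rep l) = j := by
    intro l hl
    have hmem : ((if l ∈ G.verts then l else rep l), k) ∈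
        G.edges.filter (fun e => e.2 = k) :=
      Finset.mem_filter.mpr ⟨he k hk l hl, by simp⟩
    rw [hfilt, Finset.mem_singleton, Prod.mk.injEq] at hmem
    exact hmem.1
  have hdep_rem : ∀ l ∈ depF n (F k), l ∉ G.verts → rep l = j := by
    intro l hl hlv
    have := hdep_rep l hl
    rwa [if_neg hlv] at this
  have hdep_in : ∀ l ∈ depF n (F k), l ∈ G.verts → l = j := by
    intro l hl hlv
    have := hdep_rep l hl
    rwa [if_pos hlv] at this
  set Dk : ℕ := 1 + ((depF n (F k)).filter (fun l => l ∉ G.verts)).sup D with hDk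
  set Hk : (ℕ → Bool) → Bool := fun σ =>
    F k (fun l => if l ∉ G.verts ∧ l ∈ depF n (F k) then H l (fun m => σ (m + 1)) else σ 0)
    with hHk
  have hsup : ∀ l ∈ depF n (F k), l ∉ G.verts → D l + 1 ≤ Dk := by
    intro l hl hlv
    have hmem : l ∈ (depF n (F k)).filter (fun l => l ∉ G.verts) :=
      Finset.mem_filter.mpr ⟨hl, hlv⟩
    have := Finset.le_sup (f := D) hmem
    omega
  have hDk1 : 1 ≤ Dk := by omega
  have hk_ext : ∀ σ σ' : ℕ → Bool, (∀ m < Dk, σ m = σ' m) → Hk σ = Hk σ' := by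
    intro σ σ' hσ
    rw [hHk]
    refine congrArg (F k) (funext fun l => ?_)
    by_cases hcase : l ∉ G.verts ∧ l ∈ depF n (F k)
    · rw [if_pos hcase, if_pos hcase]
      refine hd l hcase.1 _ _ fun m hm => ?_
      exact hσ _ (by have := hsup l hcase.2 hcase.1; omega)
    · rw [if_neg hcase, if_neg hcase]
      exact hσ 0 (by omega)
  have hk_spec : ∀ s0 u, Dk ≤ u →
      stateAt n F s0 u k = Hk (fun m => stateAt n F s0 (u - 1 - m) j) := by
    intro s0 u hu
    rw [stateAt_pred n F s0 u (by omega) k, hHk]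
    refine depF_congr n (F k) _ _ fun l hl => ?_
    by_cases hlv : l ∈ G.verts
    · have hlj : l = j := hdep_in l hl hlv
      rw [if_neg (by simp [hlv])]
      subst hlj
      rfl
    · rw [if_pos ⟨hlv, hl⟩]
      rw [hc l hlv s0 (u - 1) (by have := hsup l hl hlv; omega), hdep_rem l hl hlv]
      refine congrArg (H l) (funext fun m => ?_)
      have : u - 1 - 1 - m = u - 1 - (m + 1) := by omega
      rw [this]
  set rep₁ : Fin n → Fin n := fun l =>
    if l = k then j else if rep l = k ∧ l ∉ G.verts then j else rep l with hrep₁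
  set D₁ : Fin n → ℕ := fun l =>
    if l = k then Dk else if rep l = k ∧ l ∉ G.verts then D l + Dk else D l with hD₁
  set H₁ : Fin n → (ℕ → Bool) → Bool := fun l =>
    if l = k then Hk
    else if rep l = k ∧ l ∉ G.verts then
      (fun σ => H l (fun m => Hk (fun m' => σ (m + 1 + m'))))
    else H l with hH₁
  have hC_k : rep₁ k = j ∧ D₁ k = Dk ∧ H₁ k = Hk := by
    refine ⟨?_, ?_, ?_⟩ <;> simp [hrep₁, hD₁, hH₁]
  have hC_re : ∀ l, l ≠ k → rep l = k → l ∉ G.verts →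
      rep₁ l = j ∧ D₁ l = D l + Dk ∧
        H₁ l = fun σ => H l (fun m => Hk (fun m' => σ (m + 1 + m'))) := by
    intro l h1' h2' h3'
    refine ⟨?_, ?_, ?_⟩ <;> simp [hrep₁, hD₁, hH₁, h1', h2', h3']
  have hC_same : ∀ l, l ≠ k → ¬(rep l = k ∧ l ∉ G.verts) →
      rep₁ l = rep l ∧ D₁ l = D l ∧ H₁ l = H l := by
    intro l h1' h2'
    refine ⟨?_, ?_, ?_⟩ <;> simp [hrep₁, hD₁, hH₁, h1', h2']
  -- vertex membership in the new graph
  have hverts : ∀ l : Fin n, l ∉ G.verts.erase k ↔ (l = k ∨ l ∉ G.verts) := by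
    intro l
    by_cases hlk : l = k <;> by_cases hlv : l ∈ G.verts <;>
      simp [Finset.mem_erase, hlk, hlv]
  -- cardinality bookkeeping
  have hkRj : k ∉ Finset.univ.filter (fun m : Fin n => m ∉ G.verts ∧ rep m = j) := by
    simp [hk]
  have hkRk : k ∉ Finset.univ.filter (fun m : Fin n => m ∉ G.verts ∧ rep m = k) := by
    simp [hk]
  have hdisj : Disjoint (Finset.univ.filter (fun m : Fin n => m ∉ G.verts ∧ rep m = j))
      (Finset.univ.filter (fun m : Fin n => m ∉ G.verts ∧ rep m = k)) := by
    rw [Finset.disjoint_left]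
    intro m h1' h2'
    simp only [Finset.mem_filter, Finset.mem_univ, true_and] at h1' h2'
    exact hkj (h1'.2.symm.trans h2'.2).symm
  have hsubJ' : insert k ((Finset.univ.filter (fun m : Fin n => m ∉ G.verts ∧ rep m = j)) ∪
      (Finset.univ.filter (fun m : Fin n => m ∉ G.verts ∧ rep m = k))) ⊆
      Finset.univ.filter (fun m : Fin n => m ∉ G.verts.erase k ∧ rep₁ m = j) := by
    intro m hm
    rw [Finset.mem_insert, Finset.mem_union] at hm
    simp only [Finset.mem_filter, Finset.mem_univ, true_and]
    rcases hm with rfl | hm | hm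
    · exact ⟨(hverts m).mpr (Or.inl rfl), hC_k.1⟩
    · simp only [Finset.mem_filter, Finset.mem_univ, true_and] at hm
      have hmk : m ≠ k := fun h => hm.1 (h ▸ hk)
      have hnot : ¬(rep m = k ∧ m ∉ G.verts) := fun h => hkj (h.1.symm.trans hm.2)
      exact ⟨(hverts m).mpr (Or.inr hm.1), (hC_same m hmk hnot).1.trans hm.2⟩
    · simp only [Finset.mem_filter, Finset.mem_univ, true_and] at hm
      have hmk : m ≠ k := fun h => hm.1 (h ▸ hk)
      exact ⟨(hverts m).mpr (Or.inr hm.1), (hC_re m hmk hm.2 hm.1).1⟩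
  have hcard_master :
      (Finset.univ.filter (fun m : Fin n => m ∉ G.verts ∧ rep m = j)).card +
      (Finset.univ.filter (fun m : Fin n => m ∉ G.verts ∧ rep m = k)).card + 1 ≤
      (Finset.univ.filter (fun m : Fin n => m ∉ G.verts.erase k ∧ rep₁ m = j)).card := by
    have h1' := Finset.card_le_card hsubJ'
    rw [Finset.card_insert_of_notMem (by simp only [Finset.mem_union]; tauto),
      Finset.card_union_of_disjoint hdisj] at h1'
    omega
  have hDkRj : Dk ≤ (Finset.univ.filter (fun m : Fin n => m ∉ G.verts ∧ rep m = j)).card + 1 := by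
    have hsup' : ((depF n (F k)).filter (fun l => l ∉ G.verts)).sup D ≤
        (Finset.univ.filter (fun m : Fin n => m ∉ G.verts ∧ rep m = j)).card := by
      refine Finset.sup_le fun l hl => ?_
      rw [Finset.mem_filter] at hl
      have hrl : rep l = j := hdep_rem l hl.1 hl.2
      have := hb l hl.2
      rwa [hrl] at this
    omega
  have hclass : ∀ l : Fin n, l ∉ G.verts → rep l ≠ k →
      (Finset.univ.filter (fun m : Fin n => m ∉ G.verts ∧ rep m = rep l)) ⊆
      (Finset.univ.filter (fun m : Fin n => m ∉ G.verts.erase k ∧ rep₁ m = rep l)) := by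
    intro l hlv hlrep m hm
    simp only [Finset.mem_filter, Finset.mem_univ, true_and] at hm ⊢
    have hmk : m ≠ k := fun h => hm.1 (h ▸ hk)
    have hmrep : ¬(rep m = k ∧ m ∉ G.verts) := fun h => hlrep (hm.2.symm.trans h.1)
    exact ⟨(hverts m).mpr (Or.inr hm.1), (hC_same m hmk hmrep).1.trans hm.2⟩
  refine ⟨rep₁, D₁, H₁, ?_, ?_, ?_, ?_, ?_, ?_⟩
  · -- (a) rep₁ maps removed vertices into the new vertex set
    intro l hl
    have hl' : l = k ∨ l ∉ G.verts := (hverts l).mp hl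
    show rep₁ l ∈ G.verts.erase k
    rcases eq_or_ne l k with rfl | hlk
    · rw [hC_k.1]; exact Finset.mem_erase.mpr ⟨Ne.symm hkj, hj⟩
    · have hlv : l ∉ G.verts := hl'.resolve_left hlk
      by_cases hrl : rep l = k
      · rw [(hC_re l hlk hrl hlv).1]; exact Finset.mem_erase.mpr ⟨Ne.symm hkj, hj⟩
      · rw [(hC_same l hlk (fun h => hrl h.1)).1]
        exact Finset.mem_erase.mpr ⟨hrl, ha l hlv⟩
  · -- (b) delay bound
    intro l hl
    have hl' : l = k ∨ l ∉ G.verts := (hverts l).mp hl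
    show D₁ l ≤ (Finset.univ.filter
      (fun m : Fin n => m ∉ G.verts.erase k ∧ rep₁ m = rep₁ l)).card
    rcases eq_or_ne l k with rfl | hlk
    · rw [hC_k.1, hC_k.2.1]
      omega
    · have hlv : l ∉ G.verts := hl'.resolve_left hlk
      by_cases hrl : rep l = k
      · rw [(hC_re l hlk hrl hlv).1, (hC_re l hlk hrl hlv).2.1]
        have hbl := hb l hlv
        rw [hrl] at hbl
        omega
      · rw [(hC_same l hlk (fun h => hrl h.1)).1, (hC_same l hlk (fun h => hrl h.1)).2.1]
        exact le_trans (hb l hlv) (Finset.card_le_card (hclass l hlv hrl))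
  · -- (1 ≤ D₁)
    intro l hl
    have hl' : l = k ∨ l ∉ G.verts := (hverts l).mp hl
    rcases eq_or_ne l k with rfl | hlk
    · rw [hC_k.2.1]; omega
    · have hlv : l ∉ G.verts := hl'.resolve_left hlk
      by_cases hrl : rep l = k
      · rw [(hC_re l hlk hrl hlv).2.1]; omega
      · rw [(hC_same l hlk (fun h => hrl h.1)).2.1]; exact h1 l hlv
  · -- (d) extensionality of H₁
    intro l hl σ σ' hσ
    have hl' : l = k ∨ l ∉ G.verts := (hverts l).mp hl
    rcases eq_or_ne l k with rfl | hlk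
    · rw [hC_k.2.1] at hσ
      rw [hC_k.2.2]
      exact hk_ext σ σ' hσ
    · have hlv : l ∉ G.verts := hl'.resolve_left hlk
      by_cases hrl : rep l = k
      · rw [(hC_re l hlk hrl hlv).2.1] at hσ
        rw [(hC_re l hlk hrl hlv).2.2]
        refine hd l hlv _ _ fun m hm => ?_
        exact hk_ext (fun m' => σ (m + 1 + m')) (fun m' => σ' (m + 1 + m'))
          (fun m' hm' => hσ _ (by omega))
      · rw [(hC_same l hlk (fun h => hrl h.1)).2.1] at hσ
        rw [(hC_same l hlk (fun h => hrl h.1)).2.2]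
        exact hd l hlv σ σ' hσ
  · -- (c) recurrences
    intro l hl s0 t ht
    have hl' : l = k ∨ l ∉ G.verts := (hverts l).mp hl
    rcases eq_or_ne l k with rfl | hlk
    · rw [hC_k.2.1] at ht
      rw [hC_k.1, hC_k.2.2]
      exact hk_spec s0 t ht
    · have hlv : l ∉ G.verts := hl'.resolve_left hlk
      by_cases hrl : rep l = k
      · rw [(hC_re l hlk hrl hlv).2.1] at ht
        rw [(hC_re l hlk hrl hlv).1, (hC_re l hlk hrl hlv).2.2]
        show stateAt n F s0 t l =
          H l (fun m => Hk (fun m' => stateAt n F s0 (t - 1 - (m + 1 + m')) j))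
        rw [hc l hlv s0 t (by omega), hrl]
        refine hd l hlv _ _ fun m hm => ?_
        rw [hk_spec s0 (t - 1 - m) (by omega)]
        have harg : (fun m' => stateAt n F s0 (t - 1 - m - 1 - m') j)
            = (fun m' => stateAt n F s0 (t - 1 - (m + 1 + m')) j) := by
          funext m'
          congr 1
          omega
        rw [harg]
      · rw [(hC_same l hlk (fun h => hrl h.1)).2.1] at ht
        rw [(hC_same l hlk (fun h => hrl h.1)).1, (hC_same l hlk (fun h => hrl h.1)).2.2]
        exact hc l hlv s0 t ht
  · -- (e) edge covering
    intro m hm l hl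
    have hm' : m ∈ G.verts.erase k := hm
    have hmk : m ≠ k := (Finset.mem_erase.mp hm').1
    have hmv : m ∈ G.verts := (Finset.mem_erase.mp hm').2
    have hedge := he m hmv l hl
    dsimp only
    by_cases hlv : l ∈ G.verts
    · rw [if_pos hlv] at hedge
      rcases eq_or_ne l k with rfl | hlk
      · rw [if_neg (by simp [Finset.mem_erase]), hC_k.1]
        exact Finset.mem_union_right _
          (Finset.mem_image.mpr ⟨(l, m), Finset.mem_filter.mpr ⟨hedge, rfl⟩, rfl⟩)
      · rw [if_pos (Finset.mem_erase.mpr ⟨hlk, hlv⟩)]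
        exact Finset.mem_union_left _ (Finset.mem_filter.mpr ⟨hedge, ⟨hlk, hmk⟩⟩)
    · rw [if_neg hlv] at hedge
      have hlk : l ≠ k := fun h => hlv (h ▸ hk)
      rw [if_neg (fun h => hlv (Finset.mem_erase.mp h).2)]
      by_cases hrl : rep l = k
      · rw [(hC_re l hlk hrl hlv).1]
        rw [hrl] at hedge
        exact Finset.mem_union_right _
          (Finset.mem_image.mpr ⟨(k, m), Finset.mem_filter.mpr ⟨hedge, rfl⟩, rfl⟩)
      · rw [(hC_same l hlk (fun h => hrl h.1)).1]
        exact Finset.mem_union_left _ (Finset.mem_filter.mpr ⟨hedge, ⟨hrl, hmk⟩⟩)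

lemma inv_reachable (n : ℕ) (F : Fin n → (Fin n → Bool) → Bool) (G G' : DiGraph (Fin n))
    (h : Relation.ReflTransGen SubStep G G') (hI : NInv n F G) : NInv n F G' := by
  induction h with
  | refl => exact hI
  | tail _ hstep ih => exact inv_step n F _ _ hstep ih

lemma inv_init (n : ℕ) (F : Fin n → (Fin n → Bool) → Bool) : NInv n F (feedbackGraph n F) := by
  refine ⟨id, fun _ => 0, fun _ _ => false, ?_, ?_, ?_, ?_, ?_, ?_⟩ <;>
    simp [feedbackGraph]

theorem recurrence_of_reducible' (n : ℕ) (hn : 0 < n) (F : Fin n → (Fin n → Bool) → Bool)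
    (i : Fin n) (hred : ∃ G' : DiGraph (Fin n),
      Relation.ReflTransGen SubStep (feedbackGraph n F) G' ∧ G'.verts = {i}) :
    ∃ h : (Fin n → Bool) → Bool, ∀ s0 : Fin n → Bool, ∀ t : ℕ, n ≤ t →
      stateAt n F s0 t i = h (fun j : Fin n => stateAt n F s0 (t - n + (j : ℕ)) i) := by
  classical
  obtain ⟨G', hsteps, hverts⟩ := hred
  obtain ⟨rep, D, H, ha, hb, h1, hd, hc, he⟩ :=
    inv_reachable n F _ _ hsteps (inv_init n F)
  have hmem : ∀ l : Fin n, l ≠ i → l ∉ G'.verts := by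
    intro l hli
    rw [hverts]
    simp [hli]
  have hrep : ∀ l : Fin n, l ≠ i → rep l = i := by
    intro l hli
    have := ha l (hmem l hli)
    rw [hverts] at this
    simpa using this
  have hD : ∀ l : Fin n, l ≠ i → D l ≤ n - 1 := by
    intro l hli
    have hble := hb l (hmem l hli)
    have hsub : (Finset.univ.filter (fun m : Fin n => m ∉ G'.verts ∧ rep m = rep l)) ⊆
        Finset.univ.erase i := by
      intro m hm
      simp only [Finset.mem_filter, Finset.mem_univ, true_and] at hm
      refine Finset.mem_erase.mpr ⟨?_, Finset.mem_univ m⟩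
      intro hmi
      exact hm.1 (hverts ▸ (by simp [hmi]))
    have hcard := Finset.card_le_card hsub
    rw [Finset.card_erase_of_mem (Finset.mem_univ i), Finset.card_univ, Fintype.card_fin]
      at hcard
    omega
  refine ⟨fun w => F i (fun l => if l = i then w ⟨n - 1, by omega⟩
    else H l (fun m => if hm : m < n - 1 then w ⟨n - 2 - m, by omega⟩ else false)), ?_⟩
  intro s0 t ht
  rw [stateAt_pred n F s0 t (by omega) i]
  refine depF_congr n (F i) _ _ fun l hl => ?_
  by_cases hli : l = i
  · subst hli
    rw [if_pos rfl]
    show stateAt n F s0 (t - 1) l = stateAt n F s0 (t - n + (n - 1)) l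
    congr 1
    omega
  · have hlmem := hmem l hli
    rw [if_neg hli]
    rw [hc l hlmem s0 (t - 1) (by have := hD l hli; omega), hrep l hli]
    refine hd l hlmem _ _ fun m hm => ?_
    have hm' : m < n - 1 := lt_of_lt_of_le hm (by have := hD l hli; omega)
    rw [dif_pos hm']
    show stateAt n F s0 (t - 1 - 1 - m) i = stateAt n F s0 (t - n + (n - 2 - m)) i
    congr 1
    omega

/-- Lemma 1: if the feedback graph of an NLFSR with singular feedback
functions can be reduced to the single vertex `v_i`, then there is a non-linear
recurrence describing the sequence of values of bit `i`. -/
theorem recurrence_of_reducible (n : ℕ) (hn : 0 < n) (F : Fin n → (Fin n → Bool) → Bool)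
    (hsing : SingularAll n F)
    (i : Fin n) (hred : ReducibleTo (feedbackGraph n F) i) :
    ∃ h : (Fin n → Bool) → Bool, ∀ s0 : Fin n → Bool, ∀ t : ℕ, n ≤ t →
      stateAt n F s0 t i = h (fun j : Fin n => stateAt n F s0 (t - n + (j : ℕ)) i) :=
  recurrence_of_reducible' n hn F i hred
end

section
/- Let N be a uniform n-bit NLFSR (n ≥ 2) with singular feedback functions and terminal bit τ. Then the feedback graph of N is reducible to the single vertex v_τ. -/
section Aux2
variable {n : ℕ} (F : Fin n → (Fin n → Bool) → Bool)

lemma mem_depF {f : (Fin n → Bool) → Bool} {k : Fin n} :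
    k ∈ depF n f ↔ ∃ s, f (Function.update s k false) ≠ f (Function.update s k true) := by
  simp [depF]

lemma depF_proj (a : Fin n) : depF n (fun s => s a) = {a} := by
  ext k
  simp only [mem_depF, Finset.mem_singleton]
  constructor
  · rintro ⟨s, hs⟩
    by_contra hk
    apply hs
    rw [Function.update_of_ne (fun h => hk h.symm), Function.update_of_ne (fun h => hk h.symm)]
  · rintro rfl
    exact ⟨fun _ => false, by simp⟩

lemma succIdx_mem_depF (hs : SingularAll n F) (i : Fin n) : succIdx i ∈ depF n (F i) := by
  have h := hs i
  rw [mem_depF] at h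
  push_neg at h
  rw [mem_depF]
  refine ⟨fun _ => false, ?_⟩
  have h0 := h (fun _ => false)
  simp only [gfun, Function.update_self] at h0
  revert h0
  cases hA : F i (Function.update (fun _ => false) (succIdx i) false) <;>
    cases hB : F i (Function.update (fun _ => false) (succIdx i) true) <;> simp

lemma depF_subset_g (i : Fin n) (k : Fin n) (hk : k ∈ depF n (F i)) (hne : k ≠ succIdx i) :
    k ∈ depF n (gfun n F i) := by
  rw [mem_depF] at hk ⊢
  obtain ⟨s, hs⟩ := hk
  refine ⟨s, ?_⟩
  simp only [gfun, Function.update_of_ne (fun h => hne h.symm)]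
  intro h
  apply hs
  revert h
  cases s (succIdx i) <;>
    cases hA : F i (Function.update s k false) <;>
      cases hB : F i (Function.update s k true) <;> simp

lemma terminal_spec (hn : 1 ≤ n) : terminalBit n F < n ∧
    ∀ j : Fin n, (j:ℕ) < terminalBit n F → ∀ s, F j s = s (succIdx j) := by
  have hmem : terminalBit n F ∈
      {i : ℕ | i < n ∧ ∀ j : Fin n, (j:ℕ) < i → ∀ s, F j s = s (succIdx j)} := by
    apply Nat.sSup_mem
    · exact ⟨0, hn, fun j hj => absurd hj (by omega)⟩
    · exact ⟨n, fun x hx => le_of_lt hx.1⟩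
  exact hmem

end Aux2
def P1 (n : ℕ) (F : Fin n → (Fin n → Bool) → Bool) (m : ℕ) : DiGraph (Fin n) :=
  ⟨Finset.univ.filter (fun i => m ≤ (i:ℕ)),
   Finset.univ.filter (fun e : Fin n × Fin n =>
     m ≤ (e.2:ℕ) ∧ ((m ≤ (e.1:ℕ) ∧ e.1 ∈ depF n (F e.2)) ∨
       ((e.1:ℕ) = m ∧ ∃ k ∈ depF n (F e.2), (k:ℕ) < m)))⟩

def P2 (n : ℕ) (F : Fin n → (Fin n → Bool) → Bool) (τ m : ℕ) : DiGraph (Fin n) :=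
  ⟨Finset.univ.filter (fun i => τ ≤ (i:ℕ) ∧ (i:ℕ) < m),
   Finset.univ.filter (fun e : Fin n × Fin n =>
     (τ ≤ (e.2:ℕ) ∧ (e.2:ℕ) < m) ∧
     ((τ ≤ (e.1:ℕ) ∧ (e.1:ℕ) < m ∧ e.1 ∈ depF n (F e.2)) ∨
       ((e.1:ℕ) = τ ∧ ∃ k ∈ depF n (F e.2), ((k:ℕ) < τ ∨ m ≤ (k:ℕ)))))⟩

lemma P1_zero (n : ℕ) (F : Fin n → (Fin n → Bool) → Bool) :
    feedbackGraph n F = P1 n F 0 := by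
  unfold feedbackGraph P1
  congr 1
  · ext i; simp
  · ext e; simp

lemma P1_eq_P2 (n : ℕ) (F : Fin n → (Fin n → Bool) → Bool) (τ : ℕ) :
    P1 n F τ = P2 n F τ n := by
  unfold P1 P2
  congr 1
  · ext i; simp [i.isLt]
  · ext e
    simp only [Finset.mem_filter, Finset.mem_univ, true_and]
    constructor
    · rintro ⟨h2, h1⟩
      refine ⟨⟨h2, e.2.isLt⟩, ?_⟩
      rcases h1 with ⟨ha, hd⟩ | ⟨ha, k, hk, hkl⟩
      · exact Or.inl ⟨ha, e.1.isLt, hd⟩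
      · exact Or.inr ⟨ha, k, hk, Or.inl hkl⟩
    · rintro ⟨⟨h2, -⟩, h1⟩
      refine ⟨h2, ?_⟩
      rcases h1 with ⟨ha, -, hd⟩ | ⟨ha, k, hk, hkl | hkl⟩
      · exact Or.inl ⟨ha, hd⟩
      · exact Or.inr ⟨ha, k, hk, hkl⟩
      · exact absurd hkl (by have := k.isLt; omega)
lemma step1 {n : ℕ} (F : Fin n → (Fin n → Bool) → Bool) (T : ℕ) (hT : T < n)
    (hterm : ∀ j : Fin n, (j:ℕ) < T → ∀ s, F j s = s (succIdx j))
    (j : ℕ) (hj : j < T) : SubStep (P1 n F j) (P1 n F (j+1)) := by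
  have hjn : j < n := by omega
  have hj1n : j + 1 < n := by omega
  set i : Fin n := ⟨j, hjn⟩ with hi
  set jv : Fin n := ⟨j + 1, hj1n⟩ with hjv
  have hvi : (i:ℕ) = j := rfl
  have hvj : (jv:ℕ) = j + 1 := rfl
  have hsucc : succIdx i = jv := by
    simp only [succIdx, hjv, Fin.mk.injEq]
    exact Nat.mod_eq_of_lt hj1n
  have hFi : F i = fun s => s (succIdx i) := funext (hterm i hj)
  have hdep : depF n (F i) = {jv} := by rw [hFi, depF_proj, hsucc]
  refine ⟨i, jv, ?_, ?_, ?_, ?_, ?_⟩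
  · simp [P1, hvi]
  · simp only [P1, Finset.mem_filter, Finset.mem_univ, true_and, hvj]; omega
  · exact fun h => by rw [Fin.ext_iff, hvi, hvj] at h; omega
  · ext e
    simp only [P1, Finset.mem_filter, Finset.mem_univ, true_and, Finset.mem_singleton]
    constructor
    · rintro ⟨⟨h2, hcase⟩, he2⟩
      have hbe : e = (e.1, i) := by rw [← he2]
      rw [hbe]
      rcases hcase with ⟨ha, hd⟩ | ⟨ha, k, hk, hkj⟩
      · rw [he2, hdep, Finset.mem_singleton] at hd
        rw [hd]
      · rw [he2, hdep, Finset.mem_singleton] at hk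
        subst hk
        rw [hvj] at hkj
        omega
    · rintro rfl
      refine ⟨⟨le_refl _, Or.inl ⟨by rw [hvj]; omega, ?_⟩⟩, rfl⟩
      rw [hdep]; simp
  · have hverts : (Finset.univ.filter (fun x : Fin n => j + 1 ≤ (x:ℕ)))
        = (Finset.univ.filter (fun x : Fin n => j ≤ (x:ℕ))).erase i := by
      ext x
      simp only [Finset.mem_erase, Finset.mem_filter, Finset.mem_univ, true_and, ne_eq,
        Fin.ext_iff, hvi]
      omega
    have hedges : (Finset.univ.filter (fun e : Fin n × Fin n =>
        j + 1 ≤ (e.2:ℕ) ∧ ((j + 1 ≤ (e.1:ℕ) ∧ e.1 ∈ depF n (F e.2)) ∨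
          ((e.1:ℕ) = j + 1 ∧ ∃ k ∈ depF n (F e.2), (k:ℕ) < j + 1))))
        = ((P1 n F j).edges.filter (fun e => e.1 ≠ i ∧ e.2 ≠ i)) ∪
          (((P1 n F j).edges.filter (fun e => e.1 = i)).image (fun e => (jv, e.2))) := by
      ext e
      simp only [P1, Finset.mem_union, Finset.mem_filter, Finset.mem_univ, true_and,
        Finset.mem_image, ne_eq]
      constructor
      · rintro ⟨h2, hcase⟩
        rcases hcase with ⟨ha, hd⟩ | ⟨ha, k, hk, hkj⟩
        · exact Or.inl ⟨⟨by omega, Or.inl ⟨by omega, hd⟩⟩,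
            fun h => by rw [Fin.ext_iff, hvi] at h; omega,
            fun h => by rw [Fin.ext_iff, hvi] at h; omega⟩
        · refine Or.inr ⟨(i, e.2), ⟨⟨by show j ≤ (e.2:ℕ); omega, ?_⟩, rfl⟩, ?_⟩
          · rcases Nat.lt_or_ge (k:ℕ) j with hlt | hge
            · exact Or.inr ⟨hvi, k, hk, hlt⟩
            · have hki : k = i := by rw [Fin.ext_iff, hvi]; omega
              exact Or.inl ⟨le_of_eq hvi, hki ▸ hk⟩
          · have he1 : e.1 = jv := by rw [Fin.ext_iff, hvj]; omega
            rw [← he1]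
      · rintro (⟨⟨h2, hcase⟩, hai, hbi⟩ | ⟨e', ⟨⟨h2, hcase⟩, he1⟩, hee⟩)
        · have hbi' : (e.2:ℕ) ≠ j := fun h => hbi (Fin.ext (h.trans hvi.symm))
          refine ⟨by omega, ?_⟩
          rcases hcase with ⟨ha, hd⟩ | ⟨ha, _⟩
          · have hai' : (e.1:ℕ) ≠ j := fun h => hai (Fin.ext (h.trans hvi.symm))
            exact Or.inl ⟨by omega, hd⟩
          · exact absurd (Fin.ext (ha.trans hvi.symm) : e.1 = i) hai
        · have hb' : e'.2 ≠ i := by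
            intro h
            rw [h, hdep] at hcase
            rcases hcase with ⟨-, hd⟩ | ⟨-, k, hk, hkj⟩
            · rw [he1, Finset.mem_singleton, Fin.ext_iff, hvi, hvj] at hd
              omega
            · rw [Finset.mem_singleton] at hk
              subst hk
              rw [hvj] at hkj; omega
          have hb'' : (e'.2:ℕ) ≠ j := fun h => hb' (Fin.ext (h.trans hvi.symm))
          rw [← hee]
          refine ⟨by show j + 1 ≤ (e'.2:ℕ); omega, Or.inr ⟨hvj, ?_⟩⟩
          rcases hcase with ⟨-, hd⟩ | ⟨-, k, hk, hkj⟩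
          · exact ⟨e'.1, hd, by show (e'.1:ℕ) < j + 1; rw [he1, hvi]; omega⟩
          · exact ⟨k, hk, by omega⟩
    exact congrArg₂ DiGraph.mk hverts hedges
lemma step2 {n : ℕ} (F : Fin n → (Fin n → Bool) → Bool) (T : ℕ) (hsing : SingularAll n F)
    (hg : ∀ i : Fin n, T < (i:ℕ) → ∀ k ∈ depF n (gfun n F i), (k:ℕ) ≤ T)
    (m : ℕ) (hTm : T < m) (hmn : m < n) : SubStep (P2 n F T (m+1)) (P2 n F T m) := by
  have hTn : T < n := by omega
  set i : Fin n := ⟨m, hmn⟩ with hi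
  set tv : Fin n := ⟨T, hTn⟩ with htv
  have hvi : (i:ℕ) = m := rfl
  have hvt : (tv:ℕ) = T := rfl
  -- characterization of dependence sets above T
  have hchar : ∀ b : Fin n, T < (b:ℕ) → ∀ k ∈ depF n (F b), (k:ℕ) ≤ T ∨ k = succIdx b := by
    intro b hb k hk
    by_cases hks : k = succIdx b
    · exact Or.inr hks
    · exact Or.inl (hg b hb k (depF_subset_g F b k hk hks))
  have hσi : succIdx i ∈ depF n (F i) := succIdx_mem_depF F hsing i
  have hσv : (succIdx i : ℕ) = (m + 1) % n := rfl
  refine ⟨i, tv, ?_, ?_, ?_, ?_, ?_⟩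
  · simp only [P2, Finset.mem_filter, Finset.mem_univ, true_and, hvi]; omega
  · simp only [P2, Finset.mem_filter, Finset.mem_univ, true_and, hvt]; omega
  · exact fun h => by rw [Fin.ext_iff, hvi, hvt] at h; omega
  · ext e
    simp only [P2, Finset.mem_filter, Finset.mem_univ, true_and, Finset.mem_singleton]
    constructor
    · rintro ⟨⟨-, hcase⟩, he2⟩
      rw [Prod.ext_iff]
      refine ⟨?_, he2⟩
      have h1 : (e.1:ℕ) = T := by
        rcases hcase with ⟨ha1, ha2, hd⟩ | ⟨ha, -⟩
        · rw [he2] at hd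
          rcases hchar i (by omega) e.1 hd with hle | hsucc
          · omega
          · have hv : (e.1:ℕ) = (m + 1) % n := by rw [hsucc, hσv]
            rcases Nat.lt_or_ge (m+1) n with h1 | h1
            · rw [Nat.mod_eq_of_lt h1] at hv; omega
            · have hmn1 : m + 1 = n := by omega
              rw [hmn1, Nat.mod_self] at hv; omega
        · exact ha
      rw [Fin.ext_iff, hvt]; exact h1
    · rintro rfl
      refine ⟨⟨(show T ≤ (i:ℕ) ∧ (i:ℕ) < m + 1 by rw [hvi]; omega), ?_⟩, rfl⟩
      rcases Nat.lt_or_ge (m+1) n with h1 | h1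
      · refine Or.inr ⟨hvt, succIdx i, hσi, Or.inr ?_⟩
        rw [hσv, Nat.mod_eq_of_lt h1]
      · have hmn1 : m + 1 = n := by omega
        have hσ0 : (succIdx i : ℕ) = 0 := by rw [hσv, hmn1, Nat.mod_self]
        rcases Nat.eq_zero_or_pos T with hT0 | hTpos
        · refine Or.inl ⟨by rw [hvt], by rw [hvt]; omega, ?_⟩
          have : tv = succIdx i := by rw [Fin.ext_iff, hvt, hσ0, hT0]
          rw [this]; exact hσi
        · exact Or.inr ⟨hvt, succIdx i, hσi, Or.inl (by omega)⟩
  · have hverts : (Finset.univ.filter (fun x : Fin n => T ≤ (x:ℕ) ∧ (x:ℕ) < m))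
        = (Finset.univ.filter (fun x : Fin n => T ≤ (x:ℕ) ∧ (x:ℕ) < m + 1)).erase i := by
      ext x
      simp only [Finset.mem_erase, Finset.mem_filter, Finset.mem_univ, true_and, ne_eq,
        Fin.ext_iff, hvi]
      omega
    have hedges : (Finset.univ.filter (fun e : Fin n × Fin n =>
        (T ≤ (e.2:ℕ) ∧ (e.2:ℕ) < m) ∧
        ((T ≤ (e.1:ℕ) ∧ (e.1:ℕ) < m ∧ e.1 ∈ depF n (F e.2)) ∨
          ((e.1:ℕ) = T ∧ ∃ k ∈ depF n (F e.2), ((k:ℕ) < T ∨ m ≤ (k:ℕ))))))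
        = ((P2 n F T (m+1)).edges.filter (fun e => e.1 ≠ i ∧ e.2 ≠ i)) ∪
          (((P2 n F T (m+1)).edges.filter (fun e => e.1 = i)).image (fun e => (tv, e.2))) := by
      ext e
      simp only [P2, Finset.mem_union, Finset.mem_filter, Finset.mem_univ, true_and,
        Finset.mem_image, ne_eq]
      constructor
      · rintro ⟨⟨hb1, hb2⟩, hcase⟩
        rcases hcase with ⟨ha1, ha2, hd⟩ | ⟨ha, k, hk, hck⟩
        · exact Or.inl ⟨⟨⟨hb1, by omega⟩, Or.inl ⟨ha1, by omega, hd⟩⟩,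
            fun h => by rw [Fin.ext_iff, hvi] at h; omega,
            fun h => by rw [Fin.ext_iff, hvi] at h; omega⟩
        · rcases hck with hck | hck
          · exact Or.inl ⟨⟨⟨hb1, by omega⟩, Or.inr ⟨ha, k, hk, Or.inl hck⟩⟩,
              fun h => by rw [Fin.ext_iff, hvi] at h; omega,
              fun h => by rw [Fin.ext_iff, hvi] at h; omega⟩
          · rcases Nat.lt_or_ge (k:ℕ) (m+1) with hkm | hkm
            · -- k = m : go through the image
              have hki : k = i := by rw [Fin.ext_iff, hvi]; omega
              have he1 : e.1 = tv := by rw [Fin.ext_iff, hvt]; omega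
              refine Or.inr ⟨(i, e.2), ⟨⟨(show T ≤ (e.2:ℕ) ∧ (e.2:ℕ) < m + 1 by omega),
                Or.inl ⟨(by rw [hvi]; omega), (by rw [hvi]; omega), hki ▸ hk⟩⟩, rfl⟩, ?_⟩
              show (tv, e.2) = e
              rw [Prod.ext_iff]
              exact ⟨he1.symm, rfl⟩
            · exact Or.inl ⟨⟨⟨hb1, by omega⟩, Or.inr ⟨ha, k, hk, Or.inr hkm⟩⟩,
                fun h => by rw [Fin.ext_iff, hvi] at h; omega,
                fun h => by rw [Fin.ext_iff, hvi] at h; omega⟩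
      · rintro (⟨⟨⟨hb1, hb2⟩, hcase⟩, hai, hbi⟩ | ⟨e', ⟨⟨⟨hb1, hb2⟩, hcase⟩, he1⟩, hee⟩)
        · have hbi' : (e.2:ℕ) ≠ m := fun h => hbi (Fin.ext (h.trans hvi.symm))
          refine ⟨⟨hb1, by omega⟩, ?_⟩
          rcases hcase with ⟨ha1, ha2, hd⟩ | ⟨ha, k, hk, hck⟩
          · have hai' : (e.1:ℕ) ≠ m := fun h => hai (Fin.ext (h.trans hvi.symm))
            exact Or.inl ⟨ha1, by omega, hd⟩
          · exact Or.inr ⟨ha, k, hk, by omega⟩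
        · have hb' : e'.2 ≠ i := by
            intro h
            rw [h] at hcase
            rcases hcase with ⟨-, -, hd⟩ | ⟨ha, -⟩
            · rw [he1] at hd
              rcases hchar i (by omega) i hd with hle | hsucc
              · rw [hvi] at hle; omega
              · have hv : (m:ℕ) = (m + 1) % n := by
                  have := congrArg Fin.val hsucc
                  rw [hvi] at this; exact this
                rcases Nat.lt_or_ge (m+1) n with h1 | h1
                · rw [Nat.mod_eq_of_lt h1] at hv; omega
                · have hmn1 : m + 1 = n := by omega
                  rw [hmn1, Nat.mod_self] at hv; omega
            · rw [he1, hvi] at ha; omega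
          have hb'' : (e'.2:ℕ) ≠ m := fun h => hb' (Fin.ext (h.trans hvi.symm))
          rw [← hee]
          refine ⟨(show T ≤ ((tv, e'.2).2:ℕ) ∧ ((tv, e'.2).2:ℕ) < m from (show T ≤ (e'.2:ℕ) ∧ (e'.2:ℕ) < m by omega)), Or.inr ⟨hvt, ?_⟩⟩
          rcases hcase with ⟨-, -, hd⟩ | ⟨ha, -⟩
          · exact ⟨e'.1, hd, Or.inr (by rw [he1, hvi])⟩
          · rw [he1, hvi] at ha; omega
    exact congrArg₂ DiGraph.mk hverts hedges
lemma chain1 {n : ℕ} (F : Fin n → (Fin n → Bool) → Bool) (T : ℕ) (hT : T < n)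
    (hterm : ∀ j : Fin n, (j:ℕ) < T → ∀ s, F j s = s (succIdx j)) (m : ℕ) :
    m ≤ T → Relation.ReflTransGen SubStep (P1 n F 0) (P1 n F m) := by
  induction m with
  | zero => exact fun _ => .refl
  | succ k ih =>
    intro h
    exact (ih (by omega)).tail (step1 F T hT hterm k (by omega))

lemma chain2 {n : ℕ} (F : Fin n → (Fin n → Bool) → Bool) (T : ℕ) (hsing : SingularAll n F)
    (hg : ∀ i : Fin n, T < (i:ℕ) → ∀ k ∈ depF n (gfun n F i), (k:ℕ) ≤ T) (m : ℕ) :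
    T < m → m ≤ n → Relation.ReflTransGen SubStep (P2 n F T m) (P2 n F T (T+1)) := by
  induction m with
  | zero => intro h _; omega
  | succ k ih =>
    intro h1 h2
    rcases Nat.lt_or_ge T k with hk | hk
    · exact Relation.ReflTransGen.head (step2 F T hsing hg k hk (by omega)) (ih hk (by omega))
    · have hkT : k = T := by omega
      subst hkT
      exact .refl
/-- Lemma 2: the feedback graph of a uniform NLFSR is reducible to the
single vertex corresponding to its terminal bit. -/
theorem uniform_reducible_to_terminal (n : ℕ) (hn : 2 ≤ n)
    (F : Fin n → (Fin n → Bool) → Bool) (hU : UniformN n F)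
    (τ : Fin n) (hτ : (τ : ℕ) = terminalBit n F) :
    ReducibleTo (feedbackGraph n F) τ := by
  obtain ⟨hsing, hunif⟩ := hU
  obtain ⟨hTn, hterm⟩ := terminal_spec F (by omega)
  refine ⟨P2 n F (terminalBit n F) (terminalBit n F + 1), ?_, ?_⟩
  · have c1 := chain1 F (terminalBit n F) hTn hterm (terminalBit n F) le_rfl
    have c2 := chain2 F (terminalBit n F) hsing hunif n hTn le_rfl
    rw [P1_zero n F]
    rw [P1_eq_P2 n F (terminalBit n F)] at c1
    exact c1.trans c2
  · ext x
    simp only [P2, Finset.mem_filter, Finset.mem_univ, true_and, Finset.mem_singleton,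
      Fin.ext_iff, hτ]
    omega
end
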